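/- Let k be a commutative ring, (L,∘) a pre-Lie algebra over k, and c : L → List L → L the inductively defined extension. Then for every T ∈ L, c T is a symmetric function of the list entries: for every list A = [X_1,…,X_n] of elements of L and every permutation σ of {1,…,n}, c T [X_1,…,X_n] = c T [X_{σ(1)},…,X_{σ(n)}]. -/

import Mathlib

namespace PreLieExt

variable {L : Type*} [AddCommGroup L]

/-- Auxiliary version of the extension `c`, processing the list from the head
(i.e. taking the list in reversed order):
`cRev T [] = T` and
`cRev T (X :: R) = (cRev T R) ∘ X - Σᵢ cRev T (R with its i-th entry Y replaced by Y ∘ X)`. -/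
def cRev (circ : L → L → L) : L → List L → L
  | T, [] => T
  | T, X :: R =>
      circ (cRev circ T R) X -
        (((List.finRange R.length).map fun i => R.set i.1 (circ (R.get i) X)).attach.map
          fun l => cRev circ T l.1).sum
  termination_by T R => R.length
  decreasing_by
  · simp
  · obtain ⟨i, -, h⟩ := List.mem_map.mp l.2
    rw [← h]
    simp

/-- The inductively defined extension `c : L → List L → L` of a binary product `∘` on `L`:
`c T [] = T`, and
`c T (A ++ [X]) = (c T A) ∘ X - Σ_{i=1}^{n} c T [X_1, …, X_{i-1}, X_i ∘ X, X_{i+1}, …, X_n]`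
for `A = [X_1, …, X_n]`.  (This is the operation `T ∘ X_1 ⋯ X_n` of the paper; it is
implemented by recursion on the reversed list.) -/
def c (circ : L → L → L) (T : L) (A : List L) : L :=
  cRev circ T A.reverse

end PreLieExt

namespace PreLieAux
open PreLieExt

variable {L : Type*} [AddCommGroup L]

theorem cRev_nil (circ : L → L → L) (T : L) : cRev circ T [] = T := by rw [cRev]

theorem cRev_cons_plain (circ : L → L → L) (T X : L) (R : List L) :
    cRev circ T (X :: R) =
      circ (cRev circ T R) X -
        ∑ i ∈ Finset.range R.length, cRev circ T (R.set i (circ (R.getD i 0) X)) := by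
  rw [cRev]
  congr 1
  rw [List.attach_map_val, List.map_map, ← Fin.sum_univ_def, Finset.sum_range]
  exact Finset.sum_congr rfl fun i _ => by simp [List.getD_eq_getElem]

theorem getD_set_self (l : List L) {i : ℕ} (h : i < l.length) (a : L) :
    (l.set i a).getD i 0 = a := by
  rw [List.getD_eq_getElem _ _ (by simpa using h)]
  simp [h]

theorem getD_set_ne (l : List L) {i j : ℕ} (h : i ≠ j) (hj : j < l.length) (a : L) :
    (l.set i a).getD j 0 = l.getD j 0 := by
  rw [List.getD_eq_getElem _ _ (by simpa using hj), List.getD_eq_getElem _ _ hj]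
  exact List.getElem_set_ne h _

section Bilinear

variable {k : Type*} [CommRing k] [Module k L] (circ : L →ₗ[k] L →ₗ[k] L) (T : L)

local notation "F" => cRev (fun X Y => circ X Y) T

theorem cRev_cons (X : L) (R : List L) :
    F (X :: R) = circ (F R) X -
        ∑ i ∈ Finset.range R.length, F (R.set i (circ (R.getD i 0) X)) :=
  cRev_cons_plain _ T X R

theorem cRev_set_add :
    ∀ (n : ℕ) (R : List L), R.length = n → ∀ i, i < R.length → ∀ a b : L,
      F (R.set i (a + b)) = F (R.set i a) + F (R.set i b) := by
  intro n
  induction n using Nat.strong_induction_on with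
  | _ n ih =>
    intro R hR i hi a b
    cases R with
    | nil => simp at hi
    | cons X R' =>
      have hR' : R'.length < n := by simp at hR; omega
      cases i with
      | zero =>
        simp only [List.set_cons_zero]
        have hsum : (∑ j ∈ Finset.range R'.length,
            F (R'.set j (circ (R'.getD j 0) (a + b))))
            = ∑ j ∈ Finset.range R'.length,
                (F (R'.set j (circ (R'.getD j 0) a)) + F (R'.set j (circ (R'.getD j 0) b))) :=
          Finset.sum_congr rfl fun j hj => by
            rw [map_add]
            exact ih R'.length hR' R' rfl j (Finset.mem_range.mp hj) _ _
        rw [cRev_cons, cRev_cons, cRev_cons, map_add, hsum, Finset.sum_add_distrib]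
        abel
      | succ i =>
        have hi' : i < R'.length := by simpa using hi
        simp only [List.set_cons_succ]
        have hsum : (∑ j ∈ Finset.range R'.length,
            F ((R'.set i (a + b)).set j (circ ((R'.set i (a + b)).getD j 0) X)))
            = ∑ j ∈ Finset.range R'.length,
              (F ((R'.set i a).set j (circ ((R'.set i a).getD j 0) X))
                + F ((R'.set i b).set j (circ ((R'.set i b).getD j 0) X))) := by
          refine Finset.sum_congr rfl fun j hj => ?_
          have hj' : j < R'.length := Finset.mem_range.mp hj
          rcases eq_or_ne j i with rfl | hne
          · rw [getD_set_self R' hj', getD_set_self R' hj', getD_set_self R' hj',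
              List.set_set, List.set_set, List.set_set, map_add, LinearMap.add_apply]
            exact ih R'.length hR' R' rfl j hj' _ _
          · rw [getD_set_ne R' (Ne.symm hne) hj', getD_set_ne R' (Ne.symm hne) hj',
              getD_set_ne R' (Ne.symm hne) hj',
              List.set_comm _ _ (l := R') (Ne.symm hne), List.set_comm _ _ (l := R') (Ne.symm hne),
              List.set_comm _ _ (l := R') (Ne.symm hne)]
            exact ih R'.length hR' _ (by simp) i (by simpa using hi') a b
        rw [cRev_cons, cRev_cons, cRev_cons,
          ih R'.length hR' R' rfl i hi' a b, map_add, LinearMap.add_apply]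
        simp only [List.length_set]
        rw [hsum, Finset.sum_add_distrib]
        abel

theorem cRev_expand (x y : L) (R : List L) :
    F (x :: y :: R) =
      (circ (circ (F R) y) x - circ (F R) (circ y x))
      - ∑ i ∈ Finset.range R.length, circ (F (R.set i (circ (R.getD i 0) y))) x
      - ∑ i ∈ Finset.range R.length, circ (F (R.set i (circ (R.getD i 0) x))) y
      + ∑ i ∈ Finset.range R.length,
          F (R.set i (circ (R.getD i 0) (circ y x) + circ (circ (R.getD i 0) x) y))
      + ∑ i ∈ Finset.range R.length, ∑ j ∈ Finset.range R.length,
          (if j = i then 0 else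
            F ((R.set i (circ (R.getD i 0) x)).set j (circ (R.getD j 0) y))) := by
  have h4 : ∀ i ∈ Finset.range R.length,
      F (y :: R.set i (circ (R.getD i 0) x)) =
        circ (F (R.set i (circ (R.getD i 0) x))) y
        - F (R.set i (circ (circ (R.getD i 0) x) y))
        - ∑ j ∈ Finset.range R.length,
            (if j = i then 0 else
              F ((R.set i (circ (R.getD i 0) x)).set j (circ (R.getD j 0) y))) := by
    intro i hi
    have hi' : i < R.length := Finset.mem_range.mp hi
    rw [cRev_cons]
    simp only [List.length_set]
    have hsplit : (∑ j ∈ Finset.range R.length,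
        F ((R.set i (circ (R.getD i 0) x)).set j
            (circ ((R.set i (circ (R.getD i 0) x)).getD j 0) y)))
        = ∑ j ∈ Finset.range R.length,
            ((if j = i then F (R.set i (circ (circ (R.getD i 0) x) y)) else 0)
              + (if j = i then 0 else
                  F ((R.set i (circ (R.getD i 0) x)).set j (circ (R.getD j 0) y)))) := by
      refine Finset.sum_congr rfl fun j hj => ?_
      rcases eq_or_ne j i with rfl | hne
      · rw [getD_set_self R hi', List.set_set]
        simp
      · rw [getD_set_ne R (Ne.symm hne) (Finset.mem_range.mp hj)]
        simp [hne]
    rw [hsplit, Finset.sum_add_distrib, Finset.sum_ite_eq' (Finset.range R.length) i, if_pos hi]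
    abel
  have h7 : (∑ i ∈ Finset.range R.length,
      F (R.set i (circ (R.getD i 0) (circ y x) + circ (circ (R.getD i 0) x) y)))
      = ∑ i ∈ Finset.range R.length,
        (F (R.set i (circ (R.getD i 0) (circ y x)))
          + F (R.set i (circ (circ (R.getD i 0) x) y))) :=
    Finset.sum_congr rfl fun i hi =>
      cRev_set_add circ T R.length R rfl i (Finset.mem_range.mp hi) _ _
  rw [cRev_cons]
  simp only [List.length_cons]
  rw [Finset.sum_range_succ']
  simp only [List.set_cons_zero, List.set_cons_succ, List.getD_cons_zero, List.getD_cons_succ]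
  rw [cRev_cons circ T y R, cRev_cons circ T (circ y x) R, Finset.sum_congr rfl h4, h7]
  simp only [map_sub, map_sum, LinearMap.sub_apply, LinearMap.sum_apply]
  rw [Finset.sum_sub_distrib, Finset.sum_sub_distrib, Finset.sum_add_distrib]
  abel

theorem cRev_swap
    (hpl : ∀ X Y Z : L,
      circ X (circ Y Z) - circ (circ X Y) Z = circ X (circ Z Y) - circ (circ X Z) Y)
    (x y : L) (R : List L) :
    F (x :: y :: R) = F (y :: x :: R) := by
  rw [cRev_expand, cRev_expand]
  have h1 : circ (circ (F R) y) x - circ (F R) (circ y x)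
      = circ (circ (F R) x) y - circ (F R) (circ x y) := by
    rw [← neg_sub (circ (F R) (circ y x)), hpl (F R) y x, neg_sub]
  have h4 : (∑ i ∈ Finset.range R.length,
        F (R.set i (circ (R.getD i 0) (circ y x) + circ (circ (R.getD i 0) x) y)))
      = ∑ i ∈ Finset.range R.length,
        F (R.set i (circ (R.getD i 0) (circ x y) + circ (circ (R.getD i 0) y) x)) :=
    Finset.sum_congr rfl fun i _ =>
      congrArg (fun z => F (R.set i z))
        (sub_eq_sub_iff_add_eq_add.mp (hpl (R.getD i 0) y x))
  have h5 : (∑ i ∈ Finset.range R.length, ∑ j ∈ Finset.range R.length,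
        (if j = i then 0 else
          F ((R.set i (circ (R.getD i 0) x)).set j (circ (R.getD j 0) y))))
      = ∑ i ∈ Finset.range R.length, ∑ j ∈ Finset.range R.length,
        (if j = i then 0 else
          F ((R.set i (circ (R.getD i 0) y)).set j (circ (R.getD j 0) x))) := by
    rw [Finset.sum_comm]
    refine Finset.sum_congr rfl fun u _ => Finset.sum_congr rfl fun v _ => ?_
    rcases eq_or_ne u v with rfl | hne
    · simp
    · rw [if_neg hne, if_neg (Ne.symm hne)]
      exact congrArg (cRev (fun X Y => circ X Y) T) (List.set_comm _ _ (l := R) (Ne.symm hne))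
  rw [h1, h4, h5]
  abel

theorem sum_perm (N : ℕ)
    (Hf : ∀ A A' : List L, A.Perm A' → A.length = N → F A = F A')
    {l₁ l₂ : List L} (h : l₁.Perm l₂) :
    ∀ (P : List L) (X : L), P.length + l₁.length = N →
      ∑ i ∈ Finset.range l₁.length, F (P ++ l₁.set i (circ (l₁.getD i 0) X))
      = ∑ i ∈ Finset.range l₂.length, F (P ++ l₂.set i (circ (l₂.getD i 0) X)) := by
  induction h with
  | nil => intro P X _; rfl
  | cons a h ih =>
    rename_i l l'
    intro P X hN
    simp only [List.length_cons]
    rw [Finset.sum_range_succ', Finset.sum_range_succ']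
    simp only [List.set_cons_zero, List.set_cons_succ, List.getD_cons_zero, List.getD_cons_succ]
    obtain ⟨Q, hQ⟩ : ∃ Q, Q = P ++ [a] := ⟨_, rfl⟩
    have hstep : ∀ w : List L, P ++ a :: w = Q ++ w := fun w => by
      rw [hQ, List.append_cons]
    simp only [hstep]
    rw [ih Q X (by simp [hQ] at hN ⊢; omega)]
    congr 1
    exact Hf _ _ (List.Perm.append_left P (h.cons (circ a X))) (by simp at hN ⊢; omega)
  | swap a b l =>
    intro P X hN
    simp only [List.length_cons]
    rw [Finset.sum_range_succ', Finset.sum_range_succ', Finset.sum_range_succ',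
      Finset.sum_range_succ']
    simp only [List.set_cons_zero, List.set_cons_succ, List.getD_cons_zero, List.getD_cons_succ]
    simp only [List.length_cons] at hN
    have hb : F (P ++ (circ b X) :: a :: l) = F (P ++ a :: (circ b X) :: l) :=
      Hf _ _ (List.Perm.append_left P (List.Perm.swap a (circ b X) l))
        (by simp; omega)
    have ha : F (P ++ b :: (circ a X) :: l) = F (P ++ (circ a X) :: b :: l) :=
      Hf _ _ (List.Perm.append_left P (List.Perm.swap (circ a X) b l))
        (by simp; omega)
    have hrest : ∀ i ∈ Finset.range l.length,
        F (P ++ b :: a :: l.set i (circ (l.getD i 0) X))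
        = F (P ++ a :: b :: l.set i (circ (l.getD i 0) X)) := fun i _ =>
      Hf _ _ (List.Perm.append_left P (List.Perm.swap a b _)) (by simp; omega)
    rw [Finset.sum_congr rfl hrest, hb, ha]
    abel
  | trans h₁ h₂ ih₁ ih₂ =>
    intro P X hN
    rw [ih₁ P X hN, ih₂ P X (by rw [← h₁.length_eq]; exact hN)]

theorem cRev_perm
    (hpl : ∀ X Y Z : L,
      circ X (circ Y Z) - circ (circ X Y) Z = circ X (circ Z Y) - circ (circ X Z) Y) :
    ∀ (A A' : List L), A.Perm A' → F A = F A' := by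
  have key : ∀ N (A A' : List L), A.Perm A' → A.length = N → F A = F A' := by
    intro N
    induction N using Nat.strong_induction_on with
    | _ N ih =>
      intro A A' h
      induction h with
      | nil => intro _; rfl
      | cons x h' ih' =>
        rename_i l₁ l₂
        intro hlen
        have hl : l₁.length < N := by simp at hlen; omega
        have hs := sum_perm circ T l₁.length
          (fun A A' hp hlen' => ih l₁.length hl A A' hp hlen') h' [] x (by simp)
        simp only [List.nil_append] at hs
        rw [cRev_cons, cRev_cons, ih l₁.length hl l₁ l₂ h' rfl, hs]
      | swap a b l => intro _; exact cRev_swap circ T hpl b a l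
      | trans h₁ h₂ ih₁ ih₂ =>
        intro hlen
        exact (ih₁ hlen).trans (ih₂ (by rw [← h₁.length_eq]; exact hlen))
  exact fun A A' h => key A.length A A' h rfl

end Bilinear
end PreLieAux

open PreLieExt in
theorem c_perm_invariant
    (k L : Type*) [CommRing k] [AddCommGroup L] [Module k L]
    (circ : L →ₗ[k] L →ₗ[k] L)
    (hpl : ∀ X Y Z : L,
      circ X (circ Y Z) - circ (circ X Y) Z = circ X (circ Z Y) - circ (circ X Z) Y) :
    ∀ (T : L) (A A' : List L), A.Perm A' →
      c (fun X Y => circ X Y) T A = c (fun X Y => circ X Y) T A' := by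
  intro T A A' h
  exact PreLieAux.cRev_perm circ T hpl A.reverse A'.reverse
    (((A.reverse_perm).trans h).trans A'.reverse_perm.symm)
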